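/- The function B(H) = 8π·(1/(4H²−1) + (4H²/(4H²−1)^{3/2})·arctan(1/√(4H²−1))) is differentiable at every H ∈ (1/2, ∞), and its derivative B′(H) is strictly negative for every H > 1/2. -/

import Mathlib

open Real Set

/-- Hsiang–Hsiang's formula for the area of the rotational CMC sphere of mean
curvature `H` in `H² × ℝ`. -/
noncomputable def hsiangArea (H : ℝ) : ℝ :=
  8 * Real.pi * (1 / (4 * H ^ 2 - 1) +
    (4 * H ^ 2 / (4 * H ^ 2 - 1) ^ ((3 : ℝ) / 2)) *
      Real.arctan (1 / Real.sqrt (4 * H ^ 2 - 1)))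

/-- `B` is differentiable at every `H > 1/2` and `B'(H) < 0` there. -/
theorem hsiangArea_differentiable_deriv_neg :
    ∀ H : ℝ, 1 / 2 < H →
      DifferentiableAt ℝ hsiangArea H ∧ deriv hsiangArea H < 0 := by
  intro H hH
  have hH0 : 0 < H := lt_trans (by norm_num) hH
  have hs : 0 < 4 * H ^ 2 - 1 := by nlinarith
  have hr : 0 < Real.sqrt (4 * H ^ 2 - 1) := Real.sqrt_pos.2 hs
  set r : ℝ := Real.sqrt (4 * H ^ 2 - 1) with hr_def
  have hr2 : r ^ 2 = 4 * H ^ 2 - 1 := Real.sq_sqrt hs.le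
  have hs32 : (4 * H ^ 2 - 1) ^ ((3:ℝ)/2) = r ^ 3 := by
    rw [hr_def, Real.sqrt_eq_rpow, ← Real.rpow_natCast ((4 * H ^ 2 - 1) ^ ((1:ℝ)/2)) 3,
      ← Real.rpow_mul hs.le]
    norm_num
  have hs12 : (4 * H ^ 2 - 1) ^ ((3:ℝ)/2 - 1) = r := by
    rw [hr_def, Real.sqrt_eq_rpow]
    norm_num
  have h1 : HasDerivAt (fun x : ℝ => 4 * x ^ 2 - 1) (8 * H) H := by
    have h := ((hasDerivAt_pow 2 H).const_mul 4).sub_const 1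
    convert h using 1
    norm_num
    all_goals first | rfl | (norm_num; ring)
  have hinv : HasDerivAt (fun x : ℝ => 1 / (4 * x ^ 2 - 1))
      ((0 * (4 * H ^ 2 - 1) - 1 * (8 * H)) / (4 * H ^ 2 - 1) ^ 2) H :=
    (hasDerivAt_const H (1:ℝ)).div h1 hs.ne'
  have hpow : HasDerivAt (fun x : ℝ => (4 * x ^ 2 - 1) ^ ((3:ℝ)/2))
      (8 * H * ((3:ℝ)/2) * r) H := by
    have h := h1.rpow_const (p := (3:ℝ)/2) (Or.inl hs.ne')
    rwa [hs12] at h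
  have hnum : HasDerivAt (fun x : ℝ => 4 * x ^ 2) (8 * H) H := by
    have h := (hasDerivAt_pow 2 H).const_mul 4
    convert h using 1
    norm_num
    all_goals first | rfl | (norm_num; ring)
  have hr3ne : r ^ 3 ≠ 0 := by positivity
  have hfrac : HasDerivAt (fun x : ℝ => 4 * x ^ 2 / (4 * x ^ 2 - 1) ^ ((3:ℝ)/2))
      ((8 * H * r ^ 3 - 4 * H ^ 2 * (8 * H * ((3:ℝ)/2) * r)) / (r ^ 3) ^ 2) H := by
    have h := hnum.div hpow (by rw [hs32]; exact hr3ne)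
    rwa [hs32] at h
  have hsqrt : HasDerivAt (fun x : ℝ => Real.sqrt (4 * x ^ 2 - 1)) (8 * H / (2 * r)) H :=
    h1.sqrt hs.ne'
  have hinner : HasDerivAt (fun x : ℝ => 1 / Real.sqrt (4 * x ^ 2 - 1))
      ((0 * r - 1 * (8 * H / (2 * r))) / r ^ 2) H :=
    (hasDerivAt_const H (1:ℝ)).div hsqrt hr.ne'
  have harct : HasDerivAt (fun x : ℝ => Real.arctan (1 / Real.sqrt (4 * x ^ 2 - 1)))
      (1 / (1 + (1 / r) ^ 2) * ((0 * r - 1 * (8 * H / (2 * r))) / r ^ 2)) H :=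
    hinner.arctan
  set D : ℝ := 8 * Real.pi *
      ((0 * (4 * H ^ 2 - 1) - 1 * (8 * H)) / (4 * H ^ 2 - 1) ^ 2 +
        ((8 * H * r ^ 3 - 4 * H ^ 2 * (8 * H * ((3:ℝ)/2) * r)) / (r ^ 3) ^ 2 *
            Real.arctan (1 / r) +
          4 * H ^ 2 / r ^ 3 *
            (1 / (1 + (1 / r) ^ 2) * ((0 * r - 1 * (8 * H / (2 * r))) / r ^ 2)))) with hD
  have hB : HasDerivAt hsiangArea D H := by
    have h := (hinv.add (hfrac.mul harct)).const_mul (8 * Real.pi)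
    rw [hs32] at h
    exact h
  refine ⟨hB.differentiableAt, ?_⟩
  rw [hB.deriv]
  have harctpos : 0 < Real.arctan (1 / r) := by
    have := Real.arctan_strictMono (show (0:ℝ) < 1 / r by positivity)
    rwa [Real.arctan_zero] at this
  have t1 : (0 * (4 * H ^ 2 - 1) - 1 * (8 * H)) / (4 * H ^ 2 - 1) ^ 2 < 0 :=
    div_neg_of_neg_of_pos (by nlinarith) (by positivity)
  have t2 : (8 * H * r ^ 3 - 4 * H ^ 2 * (8 * H * ((3:ℝ)/2) * r)) / (r ^ 3) ^ 2 *
      Real.arctan (1 / r) < 0 := by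
    apply mul_neg_of_neg_of_pos _ harctpos
    apply div_neg_of_neg_of_pos _ (by positivity)
    have hx : 0 < H * r * (2 * H ^ 2 + 1) :=
      mul_pos (mul_pos hH0 hr) (by positivity)
    nlinarith [hr2, hx]
  have t3 : 4 * H ^ 2 / r ^ 3 *
      (1 / (1 + (1 / r) ^ 2) * ((0 * r - 1 * (8 * H / (2 * r))) / r ^ 2)) < 0 := by
    apply mul_neg_of_pos_of_neg (by positivity)
    apply mul_neg_of_pos_of_neg (by positivity)
    apply div_neg_of_neg_of_pos _ (by positivity)
    have : 0 < 8 * H / (2 * r) := by positivity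
    linarith
  rw [hD]
  apply mul_neg_of_pos_of_neg (by positivity)
  linarith
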